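/- arXiv:1901.09137 — 2 statements merged into one kernel-verified Lean document; each statement's English description precedes it below -/
import Mathlib

section
/- Let Γ be a well-bounded partition of ℚ, and for x ∈ 𝓕, r > 0 real, let B_Γ(x,r) = {y ∈ 𝓕 | ‖x−y‖_{Γ,μ(r)} < r} where μ(r) = ⌈1/r⌉. If 0 < r₁ < r₂ and r = min(r₁, r₂−r₁), then for every y ∈ B_Γ(x,r) one has B_Γ(y,r₁) ⊆ B_Γ(x,r₂); in particular B_Γ(x,r₁) ⊆ B_Γ(x,r₂). -/
open scoped Classical

/-- The Hahn field `𝓕` of maps `ℚ → ℝ` with well-ordered support. -/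
noncomputable abbrev F := HahnSeries ℚ ℝ

/-- A subset `A` of `ℚ` is well-bounded if every nonempty subset of `A`
has a maximum element. -/
def WellBoundedSet (A : Set ℚ) : Prop :=
  ∀ S ⊆ A, S.Nonempty → ∃ m ∈ S, ∀ a ∈ S, a ≤ m

/-- A well-bounded partition of `ℚ`: a countable family of mutually disjoint
well-bounded sets whose union is all of `ℚ`. -/
def IsWBPartition (γ : ℕ → Set ℚ) : Prop :=
  Pairwise (Function.onFun Disjoint γ) ∧ (∀ i, WellBoundedSet (γ i)) ∧
    (⋃ i, γ i) = Set.univ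

/-- A finite well-bounded partition of `ℚ`: each piece is moreover finite. -/
def IsFinWBPartition (γ : ℕ → Set ℚ) : Prop :=
  IsWBPartition γ ∧ ∀ i, (γ i).Finite

/-- `Γ_n`, the union of the first `n` pieces of the partition. -/
def Gam (γ : ℕ → Set ℚ) (n : ℕ) : Set ℚ := ⋃ i < n, γ i

/-- The semi-norm `‖x‖_{Γ,n} = max {|x[q]| : q ∈ Γ_n}` induced by a well-bounded
partition `Γ` of `ℚ` (realized as a supremum together with `0`). -/
noncomputable def gnorm (γ : ℕ → Set ℚ) (n : ℕ) (x : F) : ℝ :=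
  sSup (insert 0 ((fun q => |x.coeff q|) '' Gam γ n))

/-- `μ(r) = ⌈1/r⌉`. -/
noncomputable def mu (r : ℝ) : ℕ := ⌈1 / r⌉₊

/-- The pseudo-ball `B_Γ(x, r) = {y | ‖x − y‖_{Γ,μ(r)} < r}`. -/
def PB (γ : ℕ → Set ℚ) (x : F) (r : ℝ) : Set F :=
  {y : F | gnorm γ (mu r) (x - y) < r}

/-- The topology `τ_Γ` induced by the semi-norms of the partition `Γ`, as the
collection of its open sets. -/
def Top' (γ : ℕ → Set ℚ) : Set (Set F) :=
  {O : Set F | ∀ x ∈ O, ∃ r : ℝ, 0 < r ∧ PB γ x r ⊆ O}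

lemma wb_union {A B : Set ℚ} (hA : WellBoundedSet A) (hB : WellBoundedSet B) :
    WellBoundedSet (A ∪ B) := by
  intro S hS ⟨s₀, hs₀⟩
  rcases Set.eq_empty_or_nonempty (S ∩ A) with hSA | hSA
  · refine hB S (fun a ha => ?_) ⟨s₀, hs₀⟩
    rcases hS ha with h | h
    · exact absurd (Set.mem_inter ha h) (by rw [hSA]; exact id)
    · exact h
  rcases Set.eq_empty_or_nonempty (S ∩ B) with hSB | hSB
  · refine hA S (fun a ha => ?_) ⟨s₀, hs₀⟩
    rcases hS ha with h | h
    · exact h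
    · exact absurd (Set.mem_inter ha h) (by rw [hSB]; exact id)
  obtain ⟨mA, hmA, hmaxA⟩ := hA (S ∩ A) Set.inter_subset_right hSA
  obtain ⟨mB, hmB, hmaxB⟩ := hB (S ∩ B) Set.inter_subset_right hSB
  refine ⟨max mA mB, ?_, fun a ha => ?_⟩
  · rcases le_total mA mB with h | h
    · rw [max_eq_right h]; exact hmB.1
    · rw [max_eq_left h]; exact hmA.1
  · rcases hS ha with h | h
    · exact le_trans (hmaxA a ⟨ha, h⟩) (le_max_left _ _)
    · exact le_trans (hmaxB a ⟨ha, h⟩) (le_max_right _ _)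

lemma Gam_succ (γ : ℕ → Set ℚ) (n : ℕ) : Gam γ (n + 1) = Gam γ n ∪ γ n := by
  simp only [Gam, Nat.lt_succ_iff_lt_or_eq]
  ext q
  simp only [Set.mem_iUnion, Set.mem_union]
  constructor
  · rintro ⟨i, hi | rfl, hq⟩
    · exact Or.inl ⟨i, hi, hq⟩
    · exact Or.inr hq
  · rintro (⟨i, hi, hq⟩ | hq)
    · exact ⟨i, Or.inl hi, hq⟩
    · exact ⟨n, Or.inr rfl, hq⟩

lemma wb_Gam (γ : ℕ → Set ℚ) (hγ : IsWBPartition γ) (n : ℕ) :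
    WellBoundedSet (Gam γ n) := by
  induction n with
  | zero =>
    intro S hS ⟨s₀, hs₀⟩
    have : s₀ ∈ Gam γ 0 := hS hs₀
    simp [Gam] at this
  | succ n ih =>
    rw [Gam_succ]
    exact wb_union ih (hγ.2.1 n)

lemma Gam_mono (γ : ℕ → Set ℚ) {n m : ℕ} (h : n ≤ m) : Gam γ n ⊆ Gam γ m := by
  intro q hq
  simp only [Gam, Set.mem_iUnion] at hq ⊢
  obtain ⟨i, hi, hq⟩ := hq
  exact ⟨i, lt_of_lt_of_le hi h, hq⟩

lemma finite_support_inter (γ : ℕ → Set ℚ) (hγ : IsWBPartition γ) (x : F) (n : ℕ) :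
    (x.support ∩ Gam γ n).Finite := by
  by_contra hinf
  have hI : (x.support ∩ Gam γ n).Infinite := hinf
  set f : ℕ → ℚ := fun k => (hI.natEmbedding _ k : ℚ) with hf
  have hfs : ∀ k, f k ∈ x.support ∩ Gam γ n := fun k => (hI.natEmbedding _ k).2
  have hpwo : (x.support ∩ Gam γ n).IsPWO := x.isPWO_support.mono Set.inter_subset_left
  obtain ⟨g, hg⟩ := hpwo.exists_monotone_subseq (f := f) (fun k => hfs k)
  have hstrict : ∀ k, f (g k) < f (g (k + 1)) := by
    intro k
    rcases lt_or_eq_of_le (hg (Nat.le_succ k)) with h | h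
    · exact h
    · exact absurd (g.injective ((hI.natEmbedding _).injective (Subtype.ext h)))
        (Nat.succ_ne_self k).symm
  obtain ⟨m, hm, hmax⟩ := wb_Gam γ hγ n (Set.range (fun k => f (g k)))
    (by rintro _ ⟨k, rfl⟩; exact (hfs (g k)).2) ⟨f (g 0), ⟨0, rfl⟩⟩
  obtain ⟨k, rfl⟩ := hm
  exact absurd (hmax (f (g (k + 1))) ⟨k + 1, rfl⟩) (not_le.mpr (hstrict k))

lemma gnorm_set_eq (γ : ℕ → Set ℚ) (n : ℕ) (x : F) :
    insert (0 : ℝ) ((fun q => |x.coeff q|) '' Gam γ n) =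
      insert (0 : ℝ) ((fun q => |x.coeff q|) '' (x.support ∩ Gam γ n)) := by
  ext a
  simp only [Set.mem_insert_iff, Set.mem_image]
  constructor
  · rintro (rfl | ⟨q, hq, rfl⟩)
    · exact Or.inl rfl
    · by_cases hs : x.coeff q = 0
      · exact Or.inl (by simp [hs])
      · exact Or.inr ⟨q, ⟨hs, hq⟩, rfl⟩
  · rintro (rfl | ⟨q, hq, rfl⟩)
    · exact Or.inl rfl
    · exact Or.inr ⟨q, hq.2, rfl⟩

lemma gnorm_bddAbove (γ : ℕ → Set ℚ) (hγ : IsWBPartition γ) (n : ℕ) (x : F) :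
    BddAbove (insert (0 : ℝ) ((fun q => |x.coeff q|) '' Gam γ n)) := by
  rw [gnorm_set_eq]
  exact (((finite_support_inter γ hγ x n).image _).insert 0).bddAbove

lemma coeff_le_gnorm (γ : ℕ → Set ℚ) (hγ : IsWBPartition γ) (n : ℕ) (x : F)
    {q : ℚ} (hq : q ∈ Gam γ n) : |x.coeff q| ≤ gnorm γ n x :=
  le_csSup (gnorm_bddAbove γ hγ n x)
    (Set.mem_insert_of_mem _ (Set.mem_image_of_mem _ hq))

lemma gnorm_le (γ : ℕ → Set ℚ) (n : ℕ) (x : F) {a : ℝ}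
    (h : ∀ q ∈ Gam γ n, |x.coeff q| ≤ a) (ha : 0 ≤ a) : gnorm γ n x ≤ a := by
  refine Real.sSup_le ?_ ha
  rintro b (rfl | ⟨q, hq, rfl⟩)
  · exact ha
  · exact h q hq

lemma gnorm_mono (γ : ℕ → Set ℚ) (hγ : IsWBPartition γ) {n m : ℕ} (h : n ≤ m) (x : F) :
    gnorm γ n x ≤ gnorm γ m x := by
  refine gnorm_le γ n x (fun q hq => coeff_le_gnorm γ hγ m x (Gam_mono γ h hq)) ?_
  refine Real.sSup_nonneg ?_
  rintro b (rfl | ⟨q, hq, rfl⟩)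
  · exact le_refl 0
  · exact abs_nonneg _

lemma gnorm_nonneg (γ : ℕ → Set ℚ) (n : ℕ) (x : F) : 0 ≤ gnorm γ n x := by
  refine Real.sSup_nonneg ?_
  rintro b (rfl | ⟨q, hq, rfl⟩)
  · exact le_refl 0
  · exact abs_nonneg _

lemma gnorm_triangle (γ : ℕ → Set ℚ) (hγ : IsWBPartition γ) (n : ℕ) (x y z : F) :
    gnorm γ n (x - z) ≤ gnorm γ n (x - y) + gnorm γ n (y - z) := by
  refine gnorm_le γ n _ (fun q hq => ?_)
    (add_nonneg (gnorm_nonneg γ n _) (gnorm_nonneg γ n _))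
  have : (x - z).coeff q = (x - y).coeff q + (y - z).coeff q := by
    simp [HahnSeries.coeff_sub]
  rw [this]
  exact le_trans (abs_add_le _ _)
    (add_le_add (coeff_le_gnorm γ hγ n _ hq) (coeff_le_gnorm γ hγ n _ hq))

lemma mu_anti {r r' : ℝ} (hr : 0 < r) (h : r ≤ r') : mu r' ≤ mu r :=
  Nat.ceil_le_ceil (one_div_le_one_div_of_le hr h)

/-- If `0 < r₁ < r₂` and `r = min (r₁, r₂ − r₁)`, then for every `y ∈ B_Γ(x, r)`
one has `B_Γ(y, r₁) ⊆ B_Γ(x, r₂)`; in particular `B_Γ(x, r₁) ⊆ B_Γ(x, r₂)`. -/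
theorem pseudoBall_nested (γ : ℕ → Set ℚ) (hγ : IsWBPartition γ) (x : F)
    (r₁ r₂ : ℝ) (h₁ : 0 < r₁) (h₂ : r₁ < r₂) :
    (∀ y ∈ PB γ x (min r₁ (r₂ - r₁)), PB γ y r₁ ⊆ PB γ x r₂) ∧
    PB γ x r₁ ⊆ PB γ x r₂ := by
  set r := min r₁ (r₂ - r₁) with hrdef
  have hr : 0 < r := lt_min h₁ (by linarith)
  have hrr₁ : r ≤ r₁ := min_le_left _ _
  have hrr₂ : r ≤ r₂ := le_trans hrr₁ h₂.le
  have hmu₁ : mu r₂ ≤ mu r₁ := mu_anti h₁ h₂.le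
  have hmur : mu r₂ ≤ mu r := mu_anti hr hrr₂
  constructor
  · intro y hy z hz
    have hxy : gnorm γ (mu r₂) (x - y) < r :=
      lt_of_le_of_lt (gnorm_mono γ hγ hmur _) hy
    have hyz : gnorm γ (mu r₂) (y - z) < r₁ :=
      lt_of_le_of_lt (gnorm_mono γ hγ hmu₁ _) hz
    have := gnorm_triangle γ hγ (mu r₂) x y z
    have hrle : r ≤ r₂ - r₁ := min_le_right _ _
    show gnorm γ (mu r₂) (x - z) < r₂
    linarith
  · intro z hz
    have : gnorm γ (mu r₂) (x - z) ≤ gnorm γ (mu r₁) (x - z) :=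
      gnorm_mono γ hγ hmu₁ _
    exact lt_of_le_of_lt this (lt_trans hz h₂)
end

section
/- A sequence (s_n) in the Hahn field 𝓕 converging in the weak topology τ_w has the property that for every q ∈ ℚ the real sequence (s_n[q]) converges in ℝ. Conversely, if (s_n) is regular (the union of the supports of the s_n is well-ordered) and (s_n[q]) converges in ℝ for every q ∈ ℚ, then (s_n) converges in (𝓕, τ_w). -/
open scoped Classical

/-- A subset `A` of `ℚ` is well-ordered if every nonempty subset of `A`
has a minimum element. -/
def WellOrderedSet (A : Set ℚ) : Prop :=
  ∀ S ⊆ A, S.Nonempty → ∃ m ∈ S, ∀ a ∈ S, m ≤ a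

/-- Convergence of a sequence in `𝓕` with respect to the topology induced by the
family of semi-norms of the partition `γ`: for every real `ε > 0` eventually
`‖s_n − l‖_{Γ,μ(ε)} < ε`. -/
def WeakConvTo (γ : ℕ → Set ℚ) (s : ℕ → F) (l : F) : Prop :=
  ∀ ε : ℝ, 0 < ε → ∃ N : ℕ, ∀ n ≥ N, gnorm γ (mu ε) (s n - l) < ε

lemma gam_finite {γ : ℕ → Set ℚ} (hγ : ∀ i, (γ i).Finite) (n : ℕ) :
    (Gam γ n).Finite :=
  Set.Finite.biUnion (Set.finite_lt_nat n) fun i _ => hγ i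

lemma abs_coeff_le_gnorm {γ : ℕ → Set ℚ} {n : ℕ} (hfin : (Gam γ n).Finite)
    {q : ℚ} (hq : q ∈ Gam γ n) (x : F) : |x.coeff q| ≤ gnorm γ n x :=
  le_csSup (((hfin.image _).insert 0).bddAbove)
    (Set.mem_insert_of_mem _ ⟨q, hq, rfl⟩)

lemma gnorm_lt {γ : ℕ → Set ℚ} {n : ℕ} (hfin : (Gam γ n).Finite)
    {ε : ℝ} (hε : 0 < ε) (x : F) (h : ∀ q ∈ Gam γ n, |x.coeff q| < ε) :
    gnorm γ n x < ε := by
  have hmem : gnorm γ n x ∈ insert 0 ((fun q => |x.coeff q|) '' Gam γ n) :=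
    Set.Nonempty.csSup_mem ⟨0, Set.mem_insert _ _⟩ ((hfin.image _).insert 0)
  rcases hmem with h0 | ⟨q, hq, hval⟩
  · rw [h0]; exact hε
  · rw [← hval]; exact h q hq

lemma wellOrdered_isPWO {A : Set ℚ} (h : WellOrderedSet A) : A.IsPWO := by
  rw [Set.isPWO_iff_isWF]
  rw [Set.IsWF, Set.WellFoundedOn, WellFounded.wellFounded_iff_has_min]
  intro t ht
  obtain ⟨x, hx⟩ := ht
  obtain ⟨m, hm, hmin⟩ := h (Subtype.val '' t) (by rintro a ⟨b, _, rfl⟩; exact b.2)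
    ⟨x, x, hx, rfl⟩
  obtain ⟨m', hm', rfl⟩ := hm
  exact ⟨m', hm', fun y hy => not_lt.mpr (hmin y ⟨y, hy, rfl⟩)⟩

/-- A sequence `(s_n)` converging in the weak topology `τ_w` converges pointwise:
each real sequence `(s_n[q])` converges in `ℝ`. Conversely, a regular sequence
(union of supports well-ordered) converging pointwise converges in `(𝓕, τ_w)`. -/
theorem weak_convergence_criterion (γ : ℕ → Set ℚ) (hγ : IsFinWBPartition γ)
    (s : ℕ → F) :
    ((∃ l : F, WeakConvTo γ s l) →
      ∀ q : ℚ, ∃ L : ℝ,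
        Filter.Tendsto (fun n => (s n).coeff q) Filter.atTop (nhds L)) ∧
    ((WellOrderedSet (⋃ n, (s n).support) ∧
        ∀ q : ℚ, ∃ L : ℝ,
          Filter.Tendsto (fun n => (s n).coeff q) Filter.atTop (nhds L)) →
      ∃ l : F, WeakConvTo γ s l) := by
  have hfin : ∀ n, (Gam γ n).Finite := gam_finite hγ.2
  constructor
  · rintro ⟨l, hl⟩ q
    refine ⟨l.coeff q, Metric.tendsto_atTop.mpr ?_⟩
    intro ε hε
    -- find the piece containing q
    have hq : q ∈ ⋃ i, γ i := by rw [hγ.1.2.2]; trivial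
    obtain ⟨i, hqi⟩ := Set.mem_iUnion.mp hq
    set ε' : ℝ := min ε (1 / (i + 1)) with hε'def
    have hε' : 0 < ε' := lt_min hε (by positivity)
    obtain ⟨N, hN⟩ := hl ε' hε'
    refine ⟨N, fun n hn => ?_⟩
    have hqmem : q ∈ Gam γ (mu ε') := by
      have h1 : (i + 1 : ℝ) ≤ 1 / ε' := by
        rw [le_div_iff₀ hε']
        calc (i + 1 : ℝ) * ε' ≤ (i + 1 : ℝ) * (1 / (i + 1)) := by
              apply mul_le_mul_of_nonneg_left (min_le_right _ _) (by positivity)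
          _ = 1 := by field_simp
      have h2 : i + 1 ≤ mu ε' := by
        have := (Nat.le_ceil (1 / ε'))
        have : (i + 1 : ℝ) ≤ (⌈1 / ε'⌉₊ : ℝ) := le_trans h1 this
        exact_mod_cast this
      exact Set.mem_biUnion (lt_of_lt_of_le (Nat.lt_succ_self i) h2) hqi
    have hle : |(s n - l).coeff q| ≤ gnorm γ (mu ε') (s n - l) :=
      abs_coeff_le_gnorm (hfin _) hqmem _
    have : |(s n).coeff q - l.coeff q| < ε' := by
      simpa [HahnSeries.coeff_sub] using lt_of_le_of_lt hle (hN n hn)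
    rw [Real.dist_eq]
    exact lt_of_lt_of_le this (min_le_left _ _)
  · rintro ⟨hwo, hptwise⟩
    set L : ℚ → ℝ := fun q => Classical.choose (hptwise q) with hLdef
    have hLt : ∀ q, Filter.Tendsto (fun n => (s n).coeff q) Filter.atTop (nhds (L q)) :=
      fun q => Classical.choose_spec (hptwise q)
    have hsupp : Function.support L ⊆ ⋃ n, (s n).support := by
      intro q hq
      by_contra hq'
      apply hq
      have hzero : ∀ n, (s n).coeff q = 0 := by
        intro n
        by_contra hne
        exact hq' (Set.mem_iUnion.mpr ⟨n, hne⟩)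
      have : Filter.Tendsto (fun n => (s n).coeff q) Filter.atTop (nhds 0) := by
        simp only [hzero]; exact tendsto_const_nhds
      exact (tendsto_nhds_unique (hLt q) this)
    have hpwo : (Function.support L).IsPWO :=
      Set.IsPWO.mono (wellOrdered_isPWO hwo) hsupp
    refine ⟨⟨L, hpwo⟩, ?_⟩
    intro ε hε
    have hG : (Gam γ (mu ε)).Finite := hfin _
    have hev : ∀ᶠ n in Filter.atTop, ∀ q ∈ Gam γ (mu ε),
        |(s n).coeff q - L q| < ε := by
      rw [Filter.eventually_all_finite hG]
      intro q _
      have := (Metric.tendsto_atTop.mp (hLt q)) ε hε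
      obtain ⟨N, hN⟩ := this
      exact Filter.eventually_atTop.mpr ⟨N, fun n hn => by
        simpa [Real.dist_eq] using hN n hn⟩
    obtain ⟨N, hN⟩ := Filter.eventually_atTop.mp hev
    refine ⟨N, fun n hn => ?_⟩
    apply gnorm_lt hG hε
    intro q hq
    simpa [HahnSeries.coeff_sub] using hN n hn q hq
end
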